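/- arXiv:2309.07611 — 3 statements merged into one kernel-verified Lean document; each statement's English description precedes it below -/
import Mathlib

section
/- Let Y be geometrically distributed with parameter p on the non-negative integers, i.e. P(Y = k) = p(1-p)^k for k ≥ 0. Then for any set A of non-negative integers, the function g_A defined recursively by g_A(k) = 0 for k ≤ 0 and (1-p)g_A(k+1) - g_A(k) = I(k ∈ A) - P(Y ∈ A) satisfies |g_A(j) - g_A(j+k)| ≤ min{|k|, 1/p} for all integers j, k. -/
/-- Stein's method for geometric approximation: the solution `g_A` of the Stein equation
for the `Geom(p)` distribution on `{0,1,2,...}` satisfies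
`|g_A(j) - g_A(j+k)| ≤ min(|k|, 1/p)` for all integers `j, k`. -/
theorem stmt0 (p : ℝ) (hp0 : 0 < p) (hp1 : p ≤ 1)
    (A : Set ℤ) (hA : A ⊆ {k : ℤ | 0 ≤ k})
    (g : ℤ → ℝ)
    (hg0 : ∀ k : ℤ, k ≤ 0 → g k = 0)
    (hgeq : ∀ k : ℤ, 0 ≤ k →
      (1 - p) * g (k + 1) - g k =
        A.indicator (fun _ => (1 : ℝ)) k
          - ∑' n : ℕ, A.indicator (fun j => p * (1 - p) ^ j.toNat) (n : ℤ)) :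
    ∀ j k : ℤ, |g j - g (j + k)| ≤ min (|(k : ℝ)|) (1 / p) := by
  have key : (∃ c : ℝ, ∀ n : ℤ, c - 1/p ≤ g n ∧ g n ≤ c) ∧
      (∀ n : ℤ, |g (n+1) - g n| ≤ 1) := by
      set ind : ℤ → ℝ := fun m => A.indicator (fun _ => (1 : ℝ)) m with hind
      set μ : ℝ := ∑' n : ℕ, A.indicator (fun j => p * (1 - p) ^ j.toNat) (n : ℤ) with hμ
      have hindapp : ∀ m : ℤ, A.indicator (fun _ => (1 : ℝ)) m = ind m := fun m => rfl
      have hind0 : ∀ m, 0 ≤ ind m := by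
        intro m; rw [hind]; simp only [Set.indicator]; split <;> norm_num
      have hind1 : ∀ m, ind m ≤ 1 := by
        intro m; rw [hind]; simp only [Set.indicator]; split <;> norm_num
      rcases eq_or_lt_of_le hp1 with hp | hp
      · -- p = 1
        subst hp
        have hμ0 : μ = ind 0 := by
          rw [hμ, tsum_eq_single 0 ?_]
          · show A.indicator (fun j => (1:ℝ) * (1-1) ^ j.toNat) ((0:ℕ):ℤ) = ind 0
            rw [Nat.cast_zero, ← hindapp 0]
            simp only [Set.indicator]
            split_ifs <;> norm_num
          · intro n hn
            show A.indicator (fun j => (1:ℝ) * (1-1) ^ j.toNat) ((n:ℕ):ℤ) = 0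
            simp only [Set.indicator, Int.toNat_natCast]
            split <;> simp [zero_pow hn]
        have hμle : μ ≤ 1 := by rw [hμ0]; exact hind1 0
        have hμge : 0 ≤ μ := by rw [hμ0]; exact hind0 0
        have gval : ∀ n : ℤ, 0 ≤ n → g n = μ - ind n := by
          intro n hn
          have h := hgeq n hn
          rw [hindapp] at h
          norm_num at h
          linarith
        constructor
        · refine ⟨μ, ?_⟩
          intro n
          rcases le_or_gt n 0 with hn | hn
          · rw [hg0 n hn]
            constructor <;> [linarith; linarith]
          · rw [gval n hn.le]
            constructor <;> [linarith [hind1 n]; linarith [hind0 n]]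
        · intro n
          rcases le_or_gt n (-1) with hn | hn
          · rw [hg0 n (by linarith), hg0 (n+1) (by linarith)]; simp
          · have hn0 : 0 ≤ n := by linarith
            rw [gval n hn0, gval (n+1) (by linarith)]
            rw [abs_le]
            constructor <;> linarith [hind0 n, hind1 n, hind0 (n+1), hind1 (n+1)]
      · -- p < 1
        set q : ℝ := 1 - p with hqdef
        have hq0 : 0 < q := by rw [hqdef]; linarith
        have hq1 : q < 1 := by rw [hqdef]; linarith
        have hpne : p ≠ 0 := ne_of_gt hp0
        have hsum : ∀ m : ℤ, Summable (fun i : ℕ => q ^ i * ind (m + i)) := by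
          intro m
          apply Summable.of_nonneg_of_le
            (fun i => mul_nonneg (pow_nonneg hq0.le _) (hind0 _))
            (fun i => by
              calc q ^ i * ind (m + i) ≤ q ^ i * 1 :=
                    mul_le_mul_of_nonneg_left (hind1 _) (pow_nonneg hq0.le _)
                _ = q ^ i := mul_one _)
          exact summable_geometric_of_lt_one hq0.le hq1
        set T : ℤ → ℝ := fun m => ∑' i : ℕ, q ^ i * ind (m + i) with hT
        have hT0 : ∀ m, 0 ≤ T m := fun m =>
          tsum_nonneg (fun i => mul_nonneg (pow_nonneg hq0.le _) (hind0 _))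
        have hT1 : ∀ m, T m ≤ 1/p := by
          intro m
          have h1 : T m ≤ ∑' i : ℕ, q ^ i := by
            apply Summable.tsum_le_tsum _ (hsum m) (summable_geometric_of_lt_one hq0.le hq1)
            intro i
            calc q ^ i * ind (m + i) ≤ q ^ i * 1 :=
                  mul_le_mul_of_nonneg_left (hind1 _) (pow_nonneg hq0.le _)
              _ = q ^ i := mul_one _
          rw [tsum_geometric_of_lt_one hq0.le hq1] at h1
          have h2 : (1 - q)⁻¹ = 1/p := by rw [hqdef, sub_sub_cancel, one_div]
          rw [h2] at h1
          exact h1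
        have hTrec : ∀ m : ℤ, T m = ind m + q * T (m+1) := by
          intro m
          have h1 := Summable.tsum_eq_zero_add (hsum m)
          rw [hT]
          simp only []
          rw [h1]
          have h2 : (fun i : ℕ => q ^ (i+1) * ind (m + ((i:ℕ)+1 : ℕ))) =
              (fun i : ℕ => q * (q ^ i * ind ((m+1) + i))) := by
            funext i
            push_cast
            rw [pow_succ]
            ring_nf
          simp only [pow_zero, one_mul, Nat.cast_zero, add_zero]
          rw [h2, tsum_mul_left]
        have hμT : μ = p * T 0 := by
          rw [hμ]
          have h1 : ∀ n : ℕ, A.indicator (fun j => p * (1-p) ^ j.toNat) ((n:ℕ) : ℤ) =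
              p * (q ^ n * ind ((0:ℤ) + n)) := by
            intro n
            have hza : (0:ℤ) + (n:ℤ) = (n:ℤ) := zero_add _
            rw [hza, ← hindapp]
            by_cases h : ((n:ℕ):ℤ) ∈ A
            · rw [Set.indicator_of_mem h, Set.indicator_of_mem h, Int.toNat_natCast, hqdef]
              ring
            · rw [Set.indicator_of_notMem h, Set.indicator_of_notMem h]
              ring
          rw [tsum_congr h1, tsum_mul_left]
        have gform : ∀ n : ℕ, g n = μ/p - T n := by
          intro n
          induction n with
          | zero =>
            simp only [Nat.cast_zero]
            rw [hg0 0 le_rfl, hμT]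
            field_simp; ring
          | succ n ih =>
            have e1 := hgeq n (Int.natCast_nonneg n)
            rw [hindapp] at e1
            have e2 := hTrec (n : ℤ)
            have h5 : q * g ((n:ℤ)+1) = ind (n:ℤ) - μ + g (n:ℤ) := by
              linarith [e1]
            rw [ih, e2] at h5
            have h6 : q * g ((n:ℤ)+1) = q * (μ/p - T ((n:ℤ)+1)) := by
              rw [h5, hqdef]; field_simp; ring
            have e4 := mul_left_cancel₀ (ne_of_gt hq0) h6
            push_cast
            exact e4
        have gform' : ∀ n : ℤ, 0 ≤ n → g n = μ/p - T n := by
          intro n hn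
          lift n to ℕ using hn
          exact gform n
        have hμ0' : 0 ≤ μ := hμT ▸ mul_nonneg hp0.le (hT0 0)
        have hμ1 : μ ≤ 1 := by
          rw [hμT]
          calc p * T 0 ≤ p * (1/p) := mul_le_mul_of_nonneg_left (hT1 0) hp0.le
            _ = 1 := by field_simp
        constructor
        · refine ⟨μ/p, ?_⟩
          intro n
          rcases le_or_gt n 0 with hn | hn
          · rw [hg0 n hn]
            constructor
            · have h : μ/p ≤ 1/p := (div_le_div_iff_of_pos_right hp0).mpr hμ1
              linarith
            · positivity
          · rw [gform' n hn.le]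
            constructor
            · linarith [hT1 n]
            · linarith [hT0 n]
        · intro n
          rcases le_or_gt n (-1) with hn | hn
          · rw [hg0 n (by linarith), hg0 (n+1) (by linarith)]; simp
          · have hn0 : 0 ≤ n := by linarith
            rw [gform' n hn0, gform' (n+1) (by linarith)]
            have e2 := hTrec n
            have h1 : p * T (n+1) ≤ 1 := by
              calc p * T (n+1) ≤ p * (1/p) := mul_le_mul_of_nonneg_left (hT1 _) hp0.le
                _ = 1 := by field_simp
            have h2 : 0 ≤ p * T (n+1) := mul_nonneg hp0.le (hT0 _)
            rw [abs_le]
            have hq : q = 1 - p := hqdef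
            constructor <;> nlinarith [hind0 n, hind1 n, e2]
  obtain ⟨⟨c, hc⟩, hstep⟩ := key
  have hrange : ∀ a b : ℤ, |g a - g b| ≤ 1/p := by
    intro a b
    rw [abs_le]
    constructor <;> linarith [(hc a).1, (hc a).2, (hc b).1, (hc b).2]
  have tel : ∀ (a : ℤ) (m : ℕ), |g a - g (a + (m:ℤ))| ≤ (m:ℝ) := by
    intro a m
    induction m with
    | zero => simp
    | succ n ih =>
      have h1 := hstep (a + n)
      have h2 : |g a - g (a + ((n:ℤ)+1))| ≤ |g a - g (a + n)| + |g (a + n + 1) - g (a + n)| := by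
        have h3 : a + ((n:ℤ)+1) = (a + (n:ℤ)) + 1 := by ring
        rw [h3]
        calc |g a - g (a+(n:ℤ)+1)| ≤ |g a - g (a+(n:ℤ))| + |g (a+(n:ℤ)) - g (a+(n:ℤ)+1)| :=
              abs_sub_le _ _ _
          _ = |g a - g (a + (n:ℤ))| + |g (a + (n:ℤ) + 1) - g (a + (n:ℤ))| := by
              rw [abs_sub_comm (g (a+(n:ℤ)))]
      push_cast
      linarith
  intro j k
  refine le_min ?_ (hrange j (j+k))
  rcases le_or_gt 0 k with hk | hk
  · have h1 := tel j k.toNat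
    have h2 : ((k.toNat : ℕ) : ℤ) = k := Int.toNat_of_nonneg hk
    rw [h2] at h1
    have h3 : ((k.toNat : ℕ) : ℝ) = |(k:ℝ)| := by
      rw [abs_of_nonneg (by exact_mod_cast hk)]
      exact_mod_cast h2
    rw [h3] at h1; exact h1
  · have h1 := tel (j+k) (-k).toNat
    have h2 : (((-k).toNat : ℕ) : ℤ) = -k := Int.toNat_of_nonneg (by linarith)
    rw [h2] at h1
    have h4 : j + k + -k = j := by ring
    rw [h4, abs_sub_comm] at h1
    have h3 : (((-k).toNat : ℕ) : ℝ) = |(k:ℝ)| := by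
      rw [abs_of_neg (by exact_mod_cast hk)]
      exact_mod_cast h2
    rw [h3] at h1; exact h1
end

section
/- Let τ be a non-negative random variable with P(τ > u)·P(τ > v) ≤ P(τ > u + v) for all u, v ≥ 0 (the NWU property), and let ξ be an exponential random variable with rate λ independent of τ with P(τ > ξ) > 0. Define σ by P(σ > u) = P(τ > u + ξ)/P(τ > ξ). Then σ is stochastically larger than τ, i.e. P(σ > u) ≥ P(τ > u) for all u ≥ 0. -/
open MeasureTheory ProbabilityTheory

/-- If `τ ≥ 0` is NWU and `ξ ~ Exp(l)` is independent of `τ` with `P(τ > ξ) > 0`, then the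
random variable `σ` with survival function `P(σ > u) = P(τ > u + ξ)/P(τ > ξ)` is
stochastically larger than `τ`. -/
theorem stmt7 {Ω : Type*} [MeasurableSpace Ω] (μ : Measure Ω) [IsProbabilityMeasure μ]
    (l : ℝ) (hl : 0 < l)
    (τ ξ : Ω → ℝ) (hτ : Measurable τ) (hξ : Measurable ξ)
    (hτ0 : ∀ ω, 0 ≤ τ ω) (hξ0 : ∀ ω, 0 ≤ ξ ω)
    (hNWU : ∀ u v : ℝ, 0 ≤ u → 0 ≤ v →
      (μ {ω | u < τ ω}).toReal * (μ {ω | v < τ ω}).toReal ≤ (μ {ω | u + v < τ ω}).toReal)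
    (hξexp : ∀ t : ℝ, 0 ≤ t → μ {ω | t < ξ ω} = ENNReal.ofReal (Real.exp (-l * t)))
    (hindep : IndepFun τ ξ μ)
    (hpos : 0 < (μ {ω | ξ ω < τ ω}).toReal) :
    ∀ u : ℝ, 0 ≤ u →
      (μ {ω | u < τ ω}).toReal ≤
        (μ {ω | u + ξ ω < τ ω}).toReal / (μ {ω | ξ ω < τ ω}).toReal := by
  intro u hu
  set ντ := μ.map τ with hντ
  set νξ := μ.map ξ with hνξ
  haveI : IsProbabilityMeasure ντ := Measure.isProbabilityMeasure_map hτ.aemeasurable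
  haveI : IsProbabilityMeasure νξ := Measure.isProbabilityMeasure_map hξ.aemeasurable
  have hmap : μ.map (fun ω => (τ ω, ξ ω)) = ντ.prod νξ :=
    (indepFun_iff_map_prod_eq_prod_map_map hτ.aemeasurable hξ.aemeasurable).mp hindep
  have hpair : Measurable (fun ω => (τ ω, ξ ω)) := hτ.prodMk hξ
  have hf : ∀ v : ℝ, ντ (Set.Ioi v) = μ {ω | v < τ ω} := by
    intro v
    rw [hντ, Measure.map_apply hτ measurableSet_Ioi]
    rfl
  have hfmeas : Measurable (fun v : ℝ => ντ (Set.Ioi v)) := by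
    have : Antitone (fun v : ℝ => ντ (Set.Ioi v)) := fun a b hab =>
      measure_mono (Set.Ioi_subset_Ioi hab)
    exact this.measurable
  -- express P(ξ < τ) as an integral
  have hset1 : MeasurableSet {p : ℝ × ℝ | p.2 < p.1} :=
    measurableSet_lt measurable_snd measurable_fst
  have hset2 : MeasurableSet {p : ℝ × ℝ | u + p.2 < p.1} :=
    measurableSet_lt (measurable_const.add measurable_snd) measurable_fst
  have h1 : μ {ω | ξ ω < τ ω} = ∫⁻ v, ντ (Set.Ioi v) ∂νξ := by
    have : μ {ω | ξ ω < τ ω} = μ.map (fun ω => (τ ω, ξ ω)) {p : ℝ × ℝ | p.2 < p.1} := by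
      rw [Measure.map_apply hpair hset1]; rfl
    rw [this, hmap, Measure.prod_apply_symm hset1]
    rfl
  have h2 : μ {ω | u + ξ ω < τ ω} = ∫⁻ v, ντ (Set.Ioi (u + v)) ∂νξ := by
    have : μ {ω | u + ξ ω < τ ω} =
        μ.map (fun ω => (τ ω, ξ ω)) {p : ℝ × ℝ | u + p.2 < p.1} := by
      rw [Measure.map_apply hpair hset2]; rfl
    rw [this, hmap, Measure.prod_apply_symm hset2]
    rfl
  -- NWU in ℝ≥0∞
  have hNWU' : ∀ v : ℝ, 0 ≤ v →
      μ {ω | u < τ ω} * μ {ω | v < τ ω} ≤ μ {ω | u + v < τ ω} := by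
    intro v hv
    have h := hNWU u v hu hv
    rw [← ENNReal.toReal_mul] at h
    exact (ENNReal.toReal_le_toReal
      (ENNReal.mul_ne_top (measure_ne_top _ _) (measure_ne_top _ _))
      (measure_ne_top _ _)).mp h
  -- a.e. nonnegativity under νξ
  have hae : ∀ᵐ v ∂νξ, 0 ≤ v := by
    rw [hνξ]
    refine (ae_map_iff hξ.aemeasurable (by
      simpa using measurableSet_le measurable_const measurable_id)).mpr ?_
    exact Filter.Eventually.of_forall hξ0
  -- key inequality in ℝ≥0∞
  have key : μ {ω | u < τ ω} * μ {ω | ξ ω < τ ω} ≤ μ {ω | u + ξ ω < τ ω} := by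
    rw [h1, h2, ← lintegral_const_mul _ hfmeas]
    refine lintegral_mono_ae ?_
    filter_upwards [hae] with v hv
    rw [hf v, hf (u + v)]
    exact hNWU' v hv
  have key' : (μ {ω | u < τ ω}).toReal * (μ {ω | ξ ω < τ ω}).toReal ≤
      (μ {ω | u + ξ ω < τ ω}).toReal := by
    rw [← ENNReal.toReal_mul]
    exact ENNReal.toReal_mono (measure_ne_top _ _) key
  rw [le_div_iff₀ hpos]
  exact key'
end

section
/- Let τ be a non-negative integrable random variable and ξ ~ Exp(λ) independent of τ, with p = P(τ < ξ) = E[e^{-λτ}] < 1. Define σ by P(σ > u) = P(τ > u + ξ)/P(τ > ξ). Then E[σ] = E[τ]/(1-p) - 1/λ. -/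
open MeasureTheory ProbabilityTheory

section Helpers
open Real Set

lemma expint (l : ℝ) (hl : 0 < l) (x : ℝ) :
    ∫ t in (0:ℝ)..x, Real.exp (-l * t) = (1 - Real.exp (-l * x)) / l := by
  have hl' : l ≠ 0 := hl.ne'
  have h := intervalIntegral.integral_comp_mul_left (a := 0) (b := x) Real.exp (c := -l)
    (by simpa using hl')
  simp only [mul_zero] at h
  rw [h, integral_exp, Real.exp_zero, smul_eq_mul]
  field_simp
  ring

lemma noatom {μξ : Measure ℝ} [IsProbabilityMeasure μξ] (l : ℝ) (hl : 0 < l)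
    (h0 : μξ (Set.Iio 0) = 0)
    (hIoi : ∀ t : ℝ, 0 ≤ t → μξ (Set.Ioi t) = ENNReal.ofReal (Real.exp (-l * t)))
    (a : ℝ) : μξ {a} = 0 := by
  rcases lt_trichotomy a 0 with ha | ha | ha
  · refine measure_mono_null ?_ h0
    intro x hx
    simp only [Set.mem_singleton_iff] at hx
    subst hx
    exact ha
  · subst ha
    have h1 : μξ (Set.Ici (0:ℝ)) = 1 := by
      have := measure_add_measure_compl (μ := μξ) (s := Set.Ici (0:ℝ)) measurableSet_Ici
      rw [Set.compl_Ici, h0] at this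
      simpa using this
    have h2 : μξ (Set.Ioi (0:ℝ)) = 1 := by simpa using hIoi 0 le_rfl
    have hd : ({(0:ℝ)} : Set ℝ) = Set.Ici 0 \ Set.Ioi 0 := by
      ext x; simp [le_antisymm_iff, and_comm]
    rw [hd, measure_diff (Set.Ioi_subset_Ici_self) measurableSet_Ioi.nullMeasurableSet
      (by simp [h2]), h1, h2, tsub_self]
  · set s : ℕ → ℝ := fun n => a - a / (n + 1) with hs
    have hs0 : ∀ n, 0 ≤ s n := by
      intro n
      have : a / (n+1) ≤ a := by
        rw [div_le_iff₀ (by positivity)]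
        nlinarith [Nat.cast_nonneg (α := ℝ) n]
      simp [hs]; linarith
    have hsa : ∀ n, s n < a := by
      intro n; simp [hs]; positivity
    have key : ∀ n, μξ {a} ≤ ENNReal.ofReal (Real.exp (-l * s n) - Real.exp (-l * a)) := by
      intro n
      have hsub : ({a} : Set ℝ) ⊆ Set.Ioc (s n) a := by
        intro x hx; simp only [Set.mem_singleton_iff] at hx; subst hx
        exact ⟨hsa n, le_rfl⟩
      refine le_trans (measure_mono hsub) ?_
      rw [← Set.Ioi_diff_Ioi, measure_diff (Set.Ioi_subset_Ioi (hsa n).le)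
        measurableSet_Ioi.nullMeasurableSet (by simp [hIoi a ha.le]),
        hIoi _ (hs0 n), hIoi _ ha.le,
        ← ENNReal.ofReal_sub _ (Real.exp_nonneg _)]
    have hlim : Filter.Tendsto (fun n : ℕ => ENNReal.ofReal (Real.exp (-l * s n) - Real.exp (-l * a)))
        Filter.atTop (nhds 0) := by
      have hsl : Filter.Tendsto s Filter.atTop (nhds a) := by
        have h1 : Filter.Tendsto (fun n : ℕ => a * (1 / (n + 1))) Filter.atTop (nhds 0) := by
          simpa using (tendsto_one_div_add_atTop_nhds_zero_nat).const_mul a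
        have h2 : Filter.Tendsto (fun n : ℕ => a / (n + 1)) Filter.atTop (nhds 0) := by
          simpa [div_eq_mul_inv] using h1
        simpa [hs] using (tendsto_const_nhds (x := a)).sub h2
      have : Filter.Tendsto (fun n : ℕ => Real.exp (-l * s n) - Real.exp (-l * a))
          Filter.atTop (nhds 0) := by
        have hc : Continuous fun x : ℝ => Real.exp (-l * x) :=
          Real.continuous_exp.comp (continuous_const.mul continuous_id)
        have := (hc.tendsto a).comp hsl
        simpa using this.sub (tendsto_const_nhds (x := Real.exp (-l * a)))
      simpa [Function.comp_def] using (ENNReal.continuous_ofReal.tendsto 0).comp this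
    exact le_antisymm (ge_of_tendsto hlim (Filter.Eventually.of_forall key)) (zero_le)

section
variable {Ω : Type*} [MeasurableSpace Ω] (μ : Measure Ω) [IsProbabilityMeasure μ]
    (l : ℝ) (hl : 0 < l) (τ ξ : Ω → ℝ) (hτ : Measurable τ) (hξ : Measurable ξ)
    (hτ0 : ∀ ω, 0 ≤ τ ω) (hξ0 : ∀ ω, 0 ≤ ξ ω)
    (hξexp : ∀ t : ℝ, 0 ≤ t → μ {ω | t < ξ ω} = ENNReal.ofReal (Real.exp (-l * t)))
    (hindep : IndepFun τ ξ μ)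

include hl hτ hξ hτ0 hξ0 hξexp hindep

lemma jointcalc :
    μ {ω | τ ω < ξ ω} = ∫⁻ ω, ENNReal.ofReal (Real.exp (-l * τ ω)) ∂μ ∧
    μ {ω | τ ω = ξ ω} = 0 := by
  set μξ := μ.map ξ with hμξ
  have hprob : IsProbabilityMeasure μξ := Measure.isProbabilityMeasure_map hξ.aemeasurable
  have hξIoi : ∀ t : ℝ, 0 ≤ t → μξ (Set.Ioi t) = ENNReal.ofReal (Real.exp (-l * t)) := by
    intro t ht
    rw [hμξ, Measure.map_apply hξ measurableSet_Ioi]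
    exact hξexp t ht
  have hξIio : μξ (Set.Iio 0) = 0 := by
    rw [hμξ, Measure.map_apply hξ measurableSet_Iio]
    have : ξ ⁻¹' Set.Iio 0 = ∅ := by
      ext ω; simp [Set.mem_preimage, not_lt.mpr (hξ0 ω)]
    simp [this]
  have hmap : μ.map (fun ω => (τ ω, ξ ω)) = (μ.map τ).prod μξ :=
    (indepFun_iff_map_prod_eq_prod_map_map hτ.aemeasurable hξ.aemeasurable).mp hindep
  have hpair : Measurable fun ω => (τ ω, ξ ω) := hτ.prodMk hξ
  constructor
  · have hS : MeasurableSet {q : ℝ × ℝ | q.1 < q.2} :=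
      measurableSet_lt measurable_fst measurable_snd
    have h1 : {ω | τ ω < ξ ω} = (fun ω => (τ ω, ξ ω)) ⁻¹' {q : ℝ × ℝ | q.1 < q.2} := rfl
    rw [h1, ← Measure.map_apply hpair hS, hmap, Measure.prod_apply hS]
    have h2 : ∀ a : ℝ, (Prod.mk a ⁻¹' {q : ℝ × ℝ | q.1 < q.2}) = Set.Ioi a := by
      intro a; ext b; simp
    simp_rw [h2]
    have hmble : Measurable fun a : ℝ => μξ (Set.Ioi a) :=
      Antitone.measurable (fun x y hxy => measure_mono (Set.Ioi_subset_Ioi hxy))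
    rw [lintegral_map hmble hτ]
    apply lintegral_congr_ae
    filter_upwards with ω
    rw [hξIoi _ (hτ0 ω)]
  · have hS : MeasurableSet {q : ℝ × ℝ | q.1 = q.2} :=
      measurableSet_eq_fun measurable_fst measurable_snd
    have h1 : {ω | τ ω = ξ ω} = (fun ω => (τ ω, ξ ω)) ⁻¹' {q : ℝ × ℝ | q.1 = q.2} := rfl
    rw [h1, ← Measure.map_apply hpair hS, hmap, Measure.prod_apply hS]
    have h2 : ∀ a : ℝ, (Prod.mk a ⁻¹' {q : ℝ × ℝ | q.1 = q.2}) = {a} := by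
      intro a; ext b; simp [eq_comm]
    simp_rw [h2]
    simp [noatom l hl hξIio hξIoi]
end

end Helpers

/-- If `τ ≥ 0` is integrable, `ξ ~ Exp(l)` is independent of `τ`, `p = P(τ < ξ) < 1`, and
`σ` has survival function `P(σ > u) = P(τ > u + ξ)/P(τ > ξ)`, then
`E[σ] = E[τ]/(1-p) - 1/l`. -/
theorem stmt8 {Ω : Type*} [MeasurableSpace Ω] (μ : Measure Ω) [IsProbabilityMeasure μ]
    {Ω' : Type*} [MeasurableSpace Ω'] (ν : Measure Ω') [IsProbabilityMeasure ν]
    (l : ℝ) (hl : 0 < l)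
    (τ ξ : Ω → ℝ) (hτ : Measurable τ) (hξ : Measurable ξ)
    (hτ0 : ∀ ω, 0 ≤ τ ω) (hξ0 : ∀ ω, 0 ≤ ξ ω)
    (hτint : Integrable τ μ)
    (hξexp : ∀ t : ℝ, 0 ≤ t → μ {ω | t < ξ ω} = ENNReal.ofReal (Real.exp (-l * t)))
    (hindep : IndepFun τ ξ μ)
    (p : ℝ) (hp : p = (μ {ω | τ ω < ξ ω}).toReal) (hp1 : p < 1)
    (σ : Ω' → ℝ) (hσ : Measurable σ) (hσ0 : ∀ ω, 0 ≤ σ ω) (hσint : Integrable σ ν)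
    (hσlaw : ∀ u : ℝ, 0 ≤ u →
      (ν {ω | u < σ ω}).toReal * (μ {ω | ξ ω < τ ω}).toReal =
        (μ {ω | u + ξ ω < τ ω}).toReal) :
    ∫ ω, σ ω ∂ν = (∫ ω, τ ω ∂μ) / (1 - p) - 1 / l := by
  obtain ⟨hE1, hdiag⟩ := jointcalc μ l hl τ ξ hτ hξ hτ0 hξ0 hξexp hindep
  have hl' : l ≠ 0 := hl.ne'
  -- Step B : p = ∫ exp (-l τ)
  have hexp_mble : Measurable fun ω => Real.exp (-l * τ ω) :=
    Real.measurable_exp.comp (measurable_const.mul hτ)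
  have hq : p = ∫ ω, Real.exp (-l * τ ω) ∂μ := by
    rw [hp, hE1, integral_eq_lintegral_of_nonneg_ae
      (ae_of_all _ fun ω => Real.exp_nonneg _) hexp_mble.aestronglyMeasurable]
  -- Step D : (μ {ξ < τ}).toReal = 1 - p
  have hlt : (μ {ω | ξ ω < τ ω}).toReal = 1 - p := by
    have hcompl : {ω | ξ ω < τ ω}ᶜ = {ω | τ ω ≤ ξ ω} := by
      ext ω; simp [not_lt]
    have hle : μ {ω | τ ω ≤ ξ ω} = μ {ω | τ ω < ξ ω} := by
      apply le_antisymm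
      · have hsub : {ω | τ ω ≤ ξ ω} ⊆ {ω | τ ω < ξ ω} ∪ {ω | τ ω = ξ ω} := by
          intro ω h
          simp only [Set.mem_setOf_eq] at h
          rcases lt_or_eq_of_le h with h | h
          · exact Or.inl h
          · exact Or.inr h
        calc μ {ω | τ ω ≤ ξ ω} ≤ μ ({ω | τ ω < ξ ω} ∪ {ω | τ ω = ξ ω}) := measure_mono hsub
          _ ≤ μ {ω | τ ω < ξ ω} + μ {ω | τ ω = ξ ω} := measure_union_le _ _
          _ = μ {ω | τ ω < ξ ω} := by rw [hdiag, add_zero]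
      · refine measure_mono ?_
        intro ω h
        simp only [Set.mem_setOf_eq] at h ⊢
        exact le_of_lt h
    have hsum := measure_add_measure_compl (μ := μ) (s := {ω | ξ ω < τ ω})
      (measurableSet_lt hξ hτ)
    rw [hcompl, hle] at hsum
    have h1 : (μ {ω | ξ ω < τ ω}).toReal + (μ {ω | τ ω < ξ ω}).toReal = 1 := by
      rw [← ENNReal.toReal_add (measure_ne_top _ _) (measure_ne_top _ _), hsum]
      simp
    rw [hp]; linarith
  -- Step E : layer cake for σ
  have hIσ : ∫ ω, σ ω ∂ν = ∫ u in Set.Ioi (0:ℝ), (ν {a | u < σ a}).toReal :=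
    hσint.integral_eq_integral_meas_lt (ae_of_all _ hσ0)
  -- Step F : layer cake for (τ - ξ)⁺
  set f : Ω → ℝ := fun ω => max (τ ω - ξ ω) 0 with hfdef
  have hfm : Measurable f := (hτ.sub hξ).max measurable_const
  have hfint : Integrable f μ := by
    refine hτint.mono hfm.aestronglyMeasurable (ae_of_all _ fun ω => ?_)
    rw [Real.norm_eq_abs, Real.norm_eq_abs, abs_of_nonneg (le_max_right _ _),
      abs_of_nonneg (hτ0 ω)]
    exact max_le (by linarith [hξ0 ω]) (hτ0 ω)
  have hIf : ∫ ω, f ω ∂μ = ∫ u in Set.Ioi (0:ℝ), (μ {a | u + ξ a < τ a}).toReal := by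
    rw [hfint.integral_eq_integral_meas_lt (ae_of_all _ fun ω => le_max_right _ _)]
    apply setIntegral_congr_fun measurableSet_Ioi
    intro u hu
    dsimp only
    have : {a | u < f a} = {a | u + ξ a < τ a} := by
      ext a
      simp only [hfdef, Set.mem_setOf_eq, lt_max_iff]
      constructor
      · rintro (h | h)
        · linarith
        · exact absurd h (not_lt.mpr (le_of_lt hu))
      · intro h; left; linarith
    rw [this]
    rfl
  -- Step G : (1-p) * ∫ σ = ∫ f
  have hG : (1 - p) * ∫ ω, σ ω ∂ν = ∫ ω, f ω ∂μ := by
    rw [hIσ, ← integral_const_mul, hIf]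
    apply setIntegral_congr_fun measurableSet_Ioi
    intro u hu
    dsimp only
    rw [← hσlaw u (le_of_lt hu), hlt]
    ring
  -- Step H : f = τ - min τ ξ
  set g : Ω → ℝ := fun ω => min (τ ω) (ξ ω) with hgdef
  have hgm : Measurable g := hτ.min hξ
  have hgint : Integrable g μ := by
    refine hτint.mono hgm.aestronglyMeasurable (ae_of_all _ fun ω => ?_)
    rw [Real.norm_eq_abs, Real.norm_eq_abs, abs_of_nonneg (le_min (hτ0 ω) (hξ0 ω)),
      abs_of_nonneg (hτ0 ω)]
    exact min_le_left _ _
  have hfg : ∫ ω, f ω ∂μ = ∫ ω, τ ω ∂μ - ∫ ω, g ω ∂μ := by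
    rw [← integral_sub hτint hgint]
    apply integral_congr_ae
    filter_upwards with ω
    simp only [hfdef, hgdef]
    rcases le_total (τ ω) (ξ ω) with h | h
    · rw [min_eq_left h, max_eq_right (by linarith)]; ring
    · rw [min_eq_right h, max_eq_left (by linarith)]
  -- Step I : layer cake for min
  have hIg : ∫ ω, g ω ∂μ =
      ∫ u in Set.Ioi (0:ℝ), (μ {a | u < τ a}).toReal * Real.exp (-l * u) := by
    rw [hgint.integral_eq_integral_meas_lt (ae_of_all _ fun ω => le_min (hτ0 ω) (hξ0 ω))]
    apply setIntegral_congr_fun measurableSet_Ioi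
    intro u hu
    dsimp only
    have hset : {a | u < g a} = τ ⁻¹' Set.Ioi u ∩ ξ ⁻¹' Set.Ioi u := by
      ext a; simp [hgdef, lt_min_iff]
    rw [hset, measureReal_def, hindep.measure_inter_preimage_eq_mul _ _ measurableSet_Ioi measurableSet_Ioi]
    have h1 : μ (ξ ⁻¹' Set.Ioi u) = ENNReal.ofReal (Real.exp (-l * u)) := hξexp u (le_of_lt hu)
    rw [h1, ENNReal.toReal_mul, ENNReal.toReal_ofReal (Real.exp_nonneg _)]
    rfl
  -- Step J : the weighted layer cake
  have hsurv_mble : Measurable fun u : ℝ => μ {a | u < τ a} :=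
    Antitone.measurable (fun x y hxy => measure_mono (fun a ha => lt_of_le_of_lt hxy ha))
  have hJ : ∫ u in Set.Ioi (0:ℝ), (μ {a | u < τ a}).toReal * Real.exp (-l * u) = (1 - p) / l := by
    have hkey := lintegral_comp_eq_lintegral_meas_lt_mul μ (f := τ)
      (g := fun t => Real.exp (-l * t)) (ae_of_all _ hτ0) hτ.aemeasurable
      (fun t _ => ((Real.continuous_exp.comp (continuous_const.mul continuous_id)).intervalIntegrable 0 t))
      (ae_of_all _ fun t => Real.exp_nonneg _)
    simp_rw [expint l hl] at hkey
    -- LHS real value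
    have hbd : Integrable (fun ω => (1 - Real.exp (-l * τ ω)) / l) μ := by
      refine (integrable_const (1 / l)).mono ?_ (ae_of_all _ fun ω => ?_)
      · exact (((measurable_const.sub hexp_mble).div_const l)).aestronglyMeasurable
      · rw [Real.norm_eq_abs, Real.norm_eq_abs]
        have h1 : Real.exp (-l * τ ω) ≤ 1 := by
          rw [← Real.exp_zero]
          apply Real.exp_le_exp.mpr
          have := hτ0 ω; nlinarith
        have h2 : 0 ≤ Real.exp (-l * τ ω) := Real.exp_nonneg _
        rw [abs_div, abs_of_nonneg (by linarith : (0:ℝ) ≤ 1 - Real.exp (-l * τ ω)),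
          abs_of_pos hl, abs_of_nonneg (one_div_pos.mpr hl).le]
        gcongr
        linarith
    have hLHS : ∫ ω, (1 - Real.exp (-l * τ ω)) / l ∂μ =
        (∫⁻ ω, ENNReal.ofReal ((1 - Real.exp (-l * τ ω)) / l) ∂μ).toReal :=
      integral_eq_lintegral_of_nonneg_ae (ae_of_all _ fun ω => by
        have h1 : Real.exp (-l * τ ω) ≤ 1 := by
          rw [← Real.exp_zero]; apply Real.exp_le_exp.mpr; have := hτ0 ω; nlinarith
        exact div_nonneg (by linarith) hl.le) hbd.aestronglyMeasurable
    have hRHS : ∫ u in Set.Ioi (0:ℝ), (μ {a | u < τ a}).toReal * Real.exp (-l * u) =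
        (∫⁻ u in Set.Ioi (0:ℝ), μ {a | u < τ a} * ENNReal.ofReal (Real.exp (-l * u))).toReal := by
      rw [← integral_toReal]
      · apply setIntegral_congr_fun measurableSet_Ioi
        intro u _
        dsimp only
        rw [ENNReal.toReal_mul, ENNReal.toReal_ofReal (Real.exp_nonneg _)]
      · exact (hsurv_mble.mul (ENNReal.measurable_ofReal.comp
          (Real.measurable_exp.comp (measurable_const.mul measurable_id)))).aemeasurable
      · refine ae_of_all _ fun u => ?_
        exact ENNReal.mul_lt_top (measure_lt_top μ _) ENNReal.ofReal_lt_top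
    have hexpint : Integrable (fun ω => Real.exp (-l * τ ω)) μ := by
      refine (integrable_const (1:ℝ)).mono hexp_mble.aestronglyMeasurable
        (ae_of_all _ fun ω => ?_)
      rw [Real.norm_eq_abs, abs_of_nonneg (Real.exp_nonneg _), Real.norm_eq_abs,
        abs_of_nonneg (by norm_num : (0:ℝ) ≤ 1)]
      rw [← Real.exp_zero]; apply Real.exp_le_exp.mpr; have := hτ0 ω; nlinarith
    rw [hRHS, ← hkey, ← hLHS, integral_div,
      integral_sub (integrable_const (1:ℝ)) hexpint, integral_const]
    rw [← hq]
    simp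
  -- Final algebra
  have hfinal : (1 - p) * ∫ ω, σ ω ∂ν = ∫ ω, τ ω ∂μ - (1 - p) / l := by
    rw [hG, hfg, hIg, hJ]
  have hp1' : (1 : ℝ) - p ≠ 0 := by linarith
  field_simp at hfinal ⊢
  linarith [hfinal]
end
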